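/- For even n ≥ 2, the vector ω_n = (â_{k_n}, b̂_{k_n'}, ĉ_{k_n'})ᵀ satisfies ω_n = M₂^{n/2}·(0,1,1)ᵀ, where M₂ = [[2,−1,0],[2,1,2],[−2,−1,2]], k_n = (2·2^n+1)/3, k_n' = k_n − 2^n, â_k is the Fourier coefficient of |P_n|² at k, b̂_k that of \overline{P_n}Q_n at k, and ĉ_k that of P_n\overline{Q_n} at k. -/

import Mathlib

open Polynomial

/-- Rudin-Shapiro pair (P_n, Q_n). -/
noncomputable def RS : ℕ → Polynomial ℤ × Polynomial ℤ
  | 0 => (1, 1)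
  | n + 1 => ((RS n).1 + X ^ (2 ^ n) * (RS n).2, (RS n).1 - X ^ (2 ^ n) * (RS n).2)

noncomputable def RSP (n : ℕ) : Polynomial ℤ := (RS n).1
noncomputable def RSQ (n : ℕ) : Polynomial ℤ := (RS n).2

/-- evaluation at a complex number -/
noncomputable def Pe (n : ℕ) (z : ℂ) : ℂ := Polynomial.aeval z (RSP n)
noncomputable def Qe (n : ℕ) (z : ℂ) : ℂ := Polynomial.aeval z (RSQ n)
/-- The k-th Fourier coefficient of `t ↦ f (e^{it})`:
`(1/2π) ∫₀^{2π} f(e^{it}) e^{-ikt} dt`. -/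
noncomputable def fc (f : ℂ → ℂ) (k : ℤ) : ℂ :=
  (1 / (2 * Real.pi)) *
    ∫ t in (0:ℝ)..(2 * Real.pi),
      f (Complex.exp (t * Complex.I)) * Complex.exp (-(k : ℂ) * t * Complex.I)

/-- z ↦ |P_n(z)|² on the unit circle -/
noncomputable def fP (n : ℕ) (z : ℂ) : ℂ := Pe n z * (starRingEnd ℂ) (Pe n z)
/-- z ↦ conj(P_n(z)) Q_n(z) on the unit circle -/
noncomputable def fPQ (n : ℕ) (z : ℂ) : ℂ := (starRingEnd ℂ) (Pe n z) * Qe n z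
/-- z ↦ P_n(z) conj(Q_n(z)) on the unit circle -/
noncomputable def fQP (n : ℕ) (z : ℂ) : ℂ := Pe n z * (starRingEnd ℂ) (Qe n z)

def M2 : Matrix (Fin 3) (Fin 3) ℂ := !![2,-1,0; 2,1,2; -2,-1,2]


open Finset Complex intervalIntegral


/-- coefficient sequences of the Rudin–Shapiro polynomials, as functions on ℤ -/
def pq : ℕ → (ℤ → ℤ) × (ℤ → ℤ)
  | 0 => (fun j => if j = 0 then 1 else 0, fun j => if j = 0 then 1 else 0)
  | n + 1 =>
      (fun j => (pq n).1 j + (pq n).2 (j - 2 ^ n),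
       fun j => (pq n).1 j - (pq n).2 (j - 2 ^ n))

def pp (n : ℕ) : ℤ → ℤ := (pq n).1
def qq (n : ℕ) : ℤ → ℤ := (pq n).2

lemma pp_zero (j : ℤ) : pp 0 j = if j = 0 then 1 else 0 := rfl
lemma qq_zero (j : ℤ) : qq 0 j = if j = 0 then 1 else 0 := rfl
lemma pp_succ (n : ℕ) (j : ℤ) : pp (n+1) j = pp n j + qq n (j - 2 ^ n) := rfl
lemma qq_succ (n : ℕ) (j : ℤ) : qq (n+1) j = pp n j - qq n (j - 2 ^ n) := rfl

/-- supported in `[0, 2^n)` -/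
def Supp (n : ℕ) (f : ℤ → ℤ) : Prop := ∀ x : ℤ, x < 0 ∨ (2:ℤ) ^ n ≤ x → f x = 0

lemma supp_pp (n : ℕ) : Supp n (pp n) ∧ Supp n (qq n) := by
  induction n with
  | zero =>
      constructor <;> intro x hx <;> simp [pp_zero, qq_zero] <;> omega
  | succ n ih =>
      have h1 := ih.1; have h2 := ih.2
      have key : ∀ x : ℤ, x < 0 ∨ (2:ℤ) ^ (n+1) ≤ x →
          pp n x = 0 ∧ qq n (x - 2 ^ n) = 0 := by
        intro x hx
        have hp : (0:ℤ) < 2 ^ n := by positivity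
        have hpow : (2:ℤ) ^ (n+1) = 2 ^ n + 2 ^ n := by ring
        constructor
        · exact h1 x (by omega)
        · exact h2 _ (by omega)
      constructor <;> intro x hx <;>
        [rw [pp_succ]; rw [qq_succ]] <;>
        rcases key x hx with ⟨e1, e2⟩ <;> omega

lemma supp_pp' (n : ℕ) : Supp n (pp n) := (supp_pp n).1
lemma supp_qq' (n : ℕ) : Supp n (qq n) := (supp_pp n).2

/-- the window -/
noncomputable def win (n : ℕ) : Finset ℤ := Finset.Icc 0 (2 ^ n - 1)

/-- correlation sum -/
noncomputable def corr (n : ℕ) (f g : ℤ → ℤ) (k : ℤ) : ℤ := ∑ j ∈ win n, f j * g (j + k)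

lemma corr_congr {n : ℕ} {f g f' g' : ℤ → ℤ} (hf : ∀ x, f x = f' x) (hg : ∀ x, g x = g' x)
    (k : ℤ) : corr n f g k = corr n f' g' k := by
  unfold corr; exact Finset.sum_congr rfl fun j _ => by rw [hf, hg]

lemma corr_zero_of_big {n : ℕ} {f g : ℤ → ℤ} (hg : Supp n g) {k : ℤ}
    (hk : (2:ℤ) ^ n ≤ k ∨ k ≤ -(2 ^ n)) : corr n f g k = 0 := by
  unfold corr
  apply Finset.sum_eq_zero
  intro j hj
  rw [win, Finset.mem_Icc] at hj
  have : g (j + k) = 0 := hg _ (by omega)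
  rw [this, mul_zero]

lemma two_pow_succ (n : ℕ) : (2:ℤ) ^ (n+1) = 2 ^ n + 2 ^ n := by ring

lemma sum_restrict {n : ℕ} {f : ℤ → ℤ} (hf : Supp n f) (g : ℤ → ℤ) (k : ℤ) :
    ∑ j ∈ win (n+1), f j * g (j + k) = corr n f g k := by
  have hp : (0:ℤ) < 2 ^ n := by positivity
  symm
  apply Finset.sum_subset
  · apply Finset.Icc_subset_Icc le_rfl
    rw [two_pow_succ]; omega
  · intro j hj hj'
    rw [win, Finset.mem_Icc] at hj hj'
    rw [hf j (by omega), zero_mul]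

lemma sum_shift {n : ℕ} {f : ℤ → ℤ} (hf : Supp n f) (g : ℤ → ℤ) (k : ℤ) :
    ∑ j ∈ win (n+1), f (j - 2 ^ n) * g (j + k) = corr n f g (k + 2 ^ n) := by
  have hp : (0:ℤ) < 2 ^ n := by positivity
  have h1 : ∑ j ∈ win (n+1), f (j - 2 ^ n) * g (j + k)
      = ∑ j ∈ Finset.Icc ((2:ℤ) ^ n) (2 ^ (n+1) - 1), f (j - 2 ^ n) * g (j + k) := by
    symm
    apply Finset.sum_subset
    · apply Finset.Icc_subset_Icc (by omega) le_rfl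
    · intro j hj hj'
      rw [win, Finset.mem_Icc] at hj
      rw [Finset.mem_Icc] at hj'
      rw [hf _ (by omega), zero_mul]
  have h2 : Finset.Icc ((2:ℤ) ^ n) (2 ^ (n+1) - 1)
      = Finset.map (addLeftEmbedding ((2:ℤ)^n)) (Finset.Icc 0 (2 ^ n - 1)) := by
    rw [Finset.map_add_left_Icc]; congr 1 <;> ring
  rw [h1, h2, Finset.sum_map]
  apply Finset.sum_congr rfl
  intro j _
  show f (2 ^ n + j - 2 ^ n) * g (2 ^ n + j + k) = f j * g (j + (k + 2 ^ n))
  congr 1 <;> [skip; congr 1] <;> ring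

lemma corr_rec {n : ℕ} {f f' : ℤ → ℤ} (hf : Supp n f) (hf' : Supp n f')
    (g g' : ℤ → ℤ) (ε δ k : ℤ) :
    ∑ j ∈ win (n+1), (f j + ε * f' (j - 2 ^ n)) * (g (j + k) + δ * g' (j + k - 2 ^ n))
      = corr n f g k + δ * corr n f g' (k - 2 ^ n) + ε * corr n f' g (k + 2 ^ n)
        + ε * δ * corr n f' g' k := by
  have expand : ∀ j ∈ win (n+1),
      (f j + ε * f' (j - 2 ^ n)) * (g (j + k) + δ * g' (j + k - 2 ^ n))
        = f j * g (j + k) + δ * (f j * g' (j + (k - 2 ^ n)))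
          + ε * (f' (j - 2 ^ n) * g (j + k))
          + ε * δ * (f' (j - 2 ^ n) * g' (j + (k - 2 ^ n) + 2 ^ n - 2 ^ n + k - k)) := by
    intro j _
    have e1 : j + k - 2 ^ n = j + (k - 2 ^ n) := by ring
    have e2 : j + (k - 2 ^ n) + 2 ^ n - 2 ^ n + k - k = j + k - 2^n := by ring
    rw [e2, e1]; ring
  rw [Finset.sum_congr rfl expand]
  simp only [Finset.sum_add_distrib, ← Finset.mul_sum]
  rw [sum_restrict hf g k, sum_restrict hf (fun x => g' x) (k - 2 ^ n),
    sum_shift hf' g k]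
  congr 1
  have : ∀ j : ℤ, f' (j - 2^n) * g' (j + (k - 2 ^ n) + 2 ^ n - 2 ^ n + k - k)
      = f' (j - 2^n) * (fun x => g' (x - 2 ^ n)) (j + k) := by
    intro j; congr 1; ring
  rw [Finset.sum_congr rfl (fun j _ => this j), sum_shift hf' (fun x => g' (x - 2 ^ n)) k]
  have : corr n f' (fun x => g' (x - 2 ^ n)) (k + 2 ^ n) = corr n f' g' k := by
    unfold corr
    apply Finset.sum_congr rfl
    intro j _
    congr 2
    ring
  rw [this]
noncomputable def aP (n : ℕ) (k : ℤ) : ℤ := corr n (pp n) (pp n) k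
noncomputable def aQ (n : ℕ) (k : ℤ) : ℤ := corr n (qq n) (qq n) k
noncomputable def bb (n : ℕ) (k : ℤ) : ℤ := corr n (pp n) (qq n) k
noncomputable def cc (n : ℕ) (k : ℤ) : ℤ := corr n (qq n) (pp n) k

lemma aP_rec (n : ℕ) (k : ℤ) :
    aP (n+1) k = aP n k + bb n (k - 2^n) + cc n (k + 2^n) + aQ n k := by
  have h : aP (n+1) k = ∑ j ∈ win (n+1),
      (pp n j + 1 * qq n (j - 2 ^ n)) * (pp n (j + k) + 1 * qq n (j + k - 2 ^ n)) := by
    unfold aP corr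
    apply Finset.sum_congr rfl
    intro j _
    rw [pp_succ, pp_succ]; ring
  rw [h, corr_rec (supp_pp' n) (supp_qq' n)]
  unfold aP aQ bb cc; ring

lemma aQ_rec (n : ℕ) (k : ℤ) :
    aQ (n+1) k = aP n k - bb n (k - 2^n) - cc n (k + 2^n) + aQ n k := by
  have h : aQ (n+1) k = ∑ j ∈ win (n+1),
      (pp n j + (-1) * qq n (j - 2 ^ n)) * (pp n (j + k) + (-1) * qq n (j + k - 2 ^ n)) := by
    unfold aQ corr
    apply Finset.sum_congr rfl
    intro j _
    rw [qq_succ, qq_succ]; ring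
  rw [h, corr_rec (supp_pp' n) (supp_qq' n)]
  unfold aP aQ bb cc; ring

lemma bb_rec (n : ℕ) (k : ℤ) :
    bb (n+1) k = aP n k - bb n (k - 2^n) + cc n (k + 2^n) - aQ n k := by
  have h : bb (n+1) k = ∑ j ∈ win (n+1),
      (pp n j + 1 * qq n (j - 2 ^ n)) * (pp n (j + k) + (-1) * qq n (j + k - 2 ^ n)) := by
    unfold bb corr
    apply Finset.sum_congr rfl
    intro j _
    rw [pp_succ, qq_succ]; ring
  rw [h, corr_rec (supp_pp' n) (supp_qq' n)]
  unfold aP aQ bb cc; ring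

lemma cc_rec (n : ℕ) (k : ℤ) :
    cc (n+1) k = aP n k + bb n (k - 2^n) - cc n (k + 2^n) - aQ n k := by
  have h : cc (n+1) k = ∑ j ∈ win (n+1),
      (pp n j + (-1) * qq n (j - 2 ^ n)) * (pp n (j + k) + 1 * qq n (j + k - 2 ^ n)) := by
    unfold cc corr
    apply Finset.sum_congr rfl
    intro j _
    rw [qq_succ, pp_succ]; ring
  rw [h, corr_rec (supp_pp' n) (supp_qq' n)]
  unfold aP aQ bb cc; ring

lemma aPQ_zero (n : ℕ) {k : ℤ} (hk : k ≠ 0) : aP n k + aQ n k = 0 := by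
  induction n with
  | zero =>
      unfold aP aQ corr win
      simp [pp_zero, qq_zero, hk, Finset.Icc_self]
  | succ n ih =>
      rw [aP_rec, aQ_rec]
      have := ih
      omega

/-- double-sum representation -/
lemma corr_double {n : ℕ} {g : ℤ → ℤ} (hg : Supp n g) (f : ℤ → ℤ) (k : ℤ) :
    corr n f g k = ∑ j ∈ win n, ∑ l ∈ win n, if l = j + k then f j * g l else 0 := by
  unfold corr
  apply Finset.sum_congr rfl
  intro j _
  rw [Finset.sum_ite_eq' (win n) (j + k) (fun l => f j * g l)]
  by_cases h : j + k ∈ win n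
  · simp [h]
  · rw [if_neg h]
    rw [win, Finset.mem_Icc] at h
    rw [hg (j + k) (by omega), mul_zero]

lemma bb_neg (n : ℕ) (k : ℤ) : bb n (-k) = cc n k := by
  rw [bb, cc, corr_double (supp_qq' n), corr_double (supp_pp' n), Finset.sum_comm]
  apply Finset.sum_congr rfl; intro a _
  apply Finset.sum_congr rfl; intro b _
  by_cases h : a = b + (-k)
  · rw [if_pos h, if_pos (by omega), mul_comm]
  · rw [if_neg h, if_neg (by omega)]

lemma aP_neg (n : ℕ) (k : ℤ) : aP n (-k) = aP n k := by
  unfold aP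
  rw [corr_double (supp_pp' n) (pp n) (-k), corr_double (supp_pp' n) (pp n) k, Finset.sum_comm]
  apply Finset.sum_congr rfl; intro a _
  apply Finset.sum_congr rfl; intro b _
  by_cases h : a = b + (-k)
  · rw [if_pos h, if_pos (by omega), mul_comm]
  · rw [if_neg h, if_neg (by omega)]

lemma aP_big (n : ℕ) {k : ℤ} (hk : (2:ℤ)^n ≤ k ∨ k ≤ -(2^n)) : aP n k = 0 :=
  corr_zero_of_big (supp_pp' n) hk
lemma bb_big (n : ℕ) {k : ℤ} (hk : (2:ℤ)^n ≤ k ∨ k ≤ -(2^n)) : bb n k = 0 :=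
  corr_zero_of_big (supp_qq' n) hk
lemma cc_big (n : ℕ) {k : ℤ} (hk : (2:ℤ)^n ≤ k ∨ k ≤ -(2^n)) : cc n k = 0 :=
  corr_zero_of_big (supp_pp' n) hk

lemma step_two (n : ℕ) (K : ℤ) (h3 : 3 * K = 2 * 2^n + 1) (hN : (4:ℤ) ≤ 2^n) :
    aP (n+2) (4*K-1) = 2 * aP n K - bb n (K - 2^n) ∧
    bb (n+2) (4*K-1 - 4*2^n) = 2*aP n K + bb n (K-2^n) + 2*cc n (K-2^n) ∧
    cc (n+2) (4*K-1 - 4*2^n) = 2*cc n (K-2^n) - 2*aP n K - bb n (K-2^n) := by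
  have hp1 : (2:ℤ)^(n+1) = 2*2^n := by ring
  -- level n+1 facts
  have hA1 : aP (n+1) (2*K-1) = cc n (K - 2^n) := by
    rw [aP_rec]
    have e1 : 2*K-1-2^n = -(K-2^n) := by omega
    have e2 : aP n (2*K-1) + aQ n (2*K-1) = 0 := aPQ_zero n (by omega)
    have e3 : cc n (2*K-1+2^n) = 0 := cc_big n (Or.inl (by omega))
    rw [e1, bb_neg, e3]
    omega
  have hB1 : bb (n+1) K = 2 * aP n K - bb n (K - 2^n) := by
    rw [bb_rec]
    have e2 : aP n K + aQ n K = 0 := aPQ_zero n (by omega)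
    have e3 : cc n (K+2^n) = 0 := cc_big n (Or.inl (by omega))
    rw [e3]
    omega
  have hC1 : cc (n+1) K = 2 * aP n K + bb n (K - 2^n) := by
    rw [cc_rec]
    have e2 : aP n K + aQ n K = 0 := aPQ_zero n (by omega)
    have e3 : cc n (K+2^n) = 0 := cc_big n (Or.inl (by omega))
    rw [e3]
    omega
  have hA1' : aP (n+1) (4*K-1-4*2^n) = cc n (K - 2^n) := by
    have e : 4*K-1-4*2^n = -(2*K-1) := by omega
    rw [e, aP_neg, hA1]
  -- level n+2
  refine ⟨?_, ?_, ?_⟩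
  · rw [aP_rec, hp1]
    have e1 : 4*K-1-2*2^n = K := by omega
    have e2 : aP (n+1) (4*K-1) + aQ (n+1) (4*K-1) = 0 := aPQ_zero (n+1) (by omega)
    have e3 : cc (n+1) (4*K-1+2*2^n) = 0 := cc_big (n+1) (Or.inl (by rw [hp1]; omega))
    rw [e1, e3, hB1]
    omega
  · rw [bb_rec, hp1]
    have e1 : 4*K-1-4*2^n+2*2^n = K := by omega
    have e2 : aP (n+1) (4*K-1-4*2^n) + aQ (n+1) (4*K-1-4*2^n) = 0 := aPQ_zero (n+1) (by omega)
    have e3 : bb (n+1) (4*K-1-4*2^n-2*2^n) = 0 := bb_big (n+1) (Or.inr (by rw [hp1]; omega))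
    rw [e1, e3, hC1]
    omega
  · rw [cc_rec, hp1]
    have e1 : 4*K-1-4*2^n+2*2^n = K := by omega
    have e2 : aP (n+1) (4*K-1-4*2^n) + aQ (n+1) (4*K-1-4*2^n) = 0 := aPQ_zero (n+1) (by omega)
    have e3 : bb (n+1) (4*K-1-4*2^n-2*2^n) = 0 := bb_big (n+1) (Or.inr (by rw [hp1]; omega))
    rw [e1, e3, hC1]
    omega

lemma RSP_succ (n : ℕ) : RSP (n+1) = RSP n + X ^ (2 ^ n) * RSQ n := rfl
lemma RSQ_succ (n : ℕ) : RSQ (n+1) = RSP n - X ^ (2 ^ n) * RSQ n := rfl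

lemma deg_lt (n : ℕ) : (RSP n).natDegree < 2 ^ n ∧ (RSQ n).natDegree < 2 ^ n := by
  induction n with
  | zero =>
      constructor <;> simp [RSP, RSQ, RS]
  | succ n ih =>
      have hx : (X ^ (2^n) * RSQ n : Polynomial ℤ).natDegree ≤ 2^n + (RSQ n).natDegree := by
        apply le_trans (Polynomial.natDegree_mul_le)
        simp [Polynomial.natDegree_X_pow]
      have h2 : 2 ^ (n+1) = 2 ^ n + 2 ^ n := by ring
      constructor
      · rw [RSP_succ]
        apply lt_of_le_of_lt (Polynomial.natDegree_add_le _ _)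
        rw [h2]; omega
      · rw [RSQ_succ]
        apply lt_of_le_of_lt (Polynomial.natDegree_sub_le _ _)
        rw [h2]; omega

lemma coeff_bridge (n : ℕ) : ∀ j : ℕ, pp n (j:ℤ) = (RSP n).coeff j ∧ qq n (j:ℤ) = (RSQ n).coeff j := by
  induction n with
  | zero =>
      intro j
      have : RSP 0 = 1 := rfl
      have hq : RSQ 0 = 1 := rfl
      rw [this, hq, Polynomial.coeff_one, pp_zero, qq_zero]
      constructor <;> simp
  | succ n ih =>
      intro j
      have hx : (X ^ (2^n) * RSQ n : Polynomial ℤ).coeff j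
          = if 2^n ≤ j then (RSQ n).coeff (j - 2^n) else 0 := by
        rw [Polynomial.X_pow_mul, Polynomial.coeff_mul_X_pow']
      have hqq : qq n ((j:ℤ) - 2^n) = if 2^n ≤ j then (RSQ n).coeff (j - 2^n) else 0 := by
        by_cases h : 2^n ≤ j
        · rw [if_pos h]
          have e : (j:ℤ) - 2^n = ((j - 2^n : ℕ) : ℤ) := by
            have hc : ((2^n : ℕ) : ℤ) = (2:ℤ)^n := by push_cast; ring
            omega
          rw [e, (ih (j - 2^n)).2]
        · rw [if_neg h]
          apply supp_qq' n
          left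
          have : (j:ℤ) < 2^n := by exact_mod_cast Nat.lt_of_not_le h
          omega
      constructor
      · rw [pp_succ, RSP_succ, Polynomial.coeff_add, hx, (ih j).1, hqq]
      · rw [qq_succ, RSQ_succ, Polynomial.coeff_sub, hx, (ih j).1, hqq]

lemma sum_Icc_range (M : ℕ) (f : ℤ → ℂ) :
    ∑ j ∈ Finset.Icc (0:ℤ) ((M:ℤ) - 1), f j = ∑ i ∈ Finset.range M, f i := by
  have himg : Finset.Icc (0:ℤ) ((M:ℤ)-1) = Finset.image (fun i : ℕ => (i:ℤ)) (Finset.range M) := by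
    ext j
    simp only [Finset.mem_Icc, Finset.mem_image, Finset.mem_range]
    constructor
    · intro ⟨h0, hM⟩
      exact ⟨j.toNat, by omega, by omega⟩
    · intro ⟨i, hi, he⟩
      omega
  rw [himg, Finset.sum_image (fun a _ b _ h => by exact_mod_cast h)]

lemma Pe_sum (n : ℕ) (t : ℝ) :
    Pe n (Complex.exp ((t:ℂ) * Complex.I))
      = ∑ j ∈ win n, (pp n j : ℂ) * Complex.exp ((j:ℂ) * t * Complex.I) := by
  rw [Pe, Polynomial.aeval_eq_sum_range' (deg_lt n).1 (Complex.exp ((t:ℂ) * Complex.I))]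
  rw [win, show ((2:ℤ)^n - 1 : ℤ) = ((2^n : ℕ) : ℤ) - 1 by push_cast; ring,
    sum_Icc_range (2^n) (fun j => (pp n j : ℂ) * Complex.exp ((j:ℂ) * t * Complex.I))]
  apply Finset.sum_congr rfl
  intro i _
  rw [zsmul_eq_mul, (coeff_bridge n i).1]
  congr 1
  rw [← Complex.exp_nat_mul]
  congr 1
  push_cast
  ring

lemma integral_exp_eq (m : ℤ) :
    (∫ t in (0:ℝ)..(2*Real.pi), Complex.exp ((m:ℂ) * t * Complex.I))
      = if m = 0 then ((2*Real.pi : ℝ) : ℂ) else 0 := by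
  by_cases hm : m = 0
  · subst hm; simp
  · rw [if_neg hm]
    have hc : (m:ℂ) * Complex.I ≠ 0 :=
      mul_ne_zero (Int.cast_ne_zero.2 hm) Complex.I_ne_zero
    have hfun : (fun t : ℝ => Complex.exp ((m:ℂ) * t * Complex.I))
        = fun t : ℝ => Complex.exp (((m:ℂ) * Complex.I) * t) := by
      funext t; ring_nf
    rw [hfun, integral_exp_mul_complex hc]
    have h1 : (m:ℂ) * Complex.I * ((2*Real.pi:ℝ):ℂ) = (m:ℤ) * (2 * Real.pi * Complex.I) := by
      push_cast; ring
    have h2 : (m:ℂ) * Complex.I * ((0:ℝ):ℂ) = 0 := by push_cast; ring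
    rw [h1, h2, Complex.exp_int_mul_two_pi_mul_I, Complex.exp_zero, sub_self, zero_div]

lemma fc_master (n : ℕ) (F G : ℤ → ℤ) (hF : Supp n F) (f : ℂ → ℂ)
    (hf : ∀ t : ℝ, f (Complex.exp ((t:ℂ) * Complex.I)) =
      (∑ j ∈ win n, (F j : ℂ) * Complex.exp ((j:ℂ) * t * Complex.I)) *
      (∑ l ∈ win n, (G l : ℂ) * Complex.exp (-(l:ℂ) * t * Complex.I)))
    (k : ℤ) : fc f k = ((corr n G F k : ℤ) : ℂ) := by
  have twopi : ((2*Real.pi:ℝ):ℂ) ≠ 0 := by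
    simp [Real.pi_ne_zero]
  set g : ℤ → ℤ → ℝ → ℂ := fun j l t =>
    ((F j * G l : ℤ) : ℂ) * Complex.exp (((j - l - k : ℤ) : ℂ) * t * Complex.I) with hg
  have step1 : ∀ t : ℝ,
      f (Complex.exp ((t:ℂ) * Complex.I)) * Complex.exp (-(k : ℂ) * t * Complex.I)
        = ∑ j ∈ win n, ∑ l ∈ win n, g j l t := by
    intro t
    rw [hf t, Finset.sum_mul_sum]
    rw [Finset.sum_mul]
    apply Finset.sum_congr rfl
    intro j _
    rw [Finset.sum_mul]
    apply Finset.sum_congr rfl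
    intro l _
    show (F j : ℂ) * Complex.exp ((j:ℂ) * t * Complex.I) *
        ((G l : ℂ) * Complex.exp (-(l:ℂ) * t * Complex.I)) *
        Complex.exp (-(k : ℂ) * t * Complex.I)
      = ((F j * G l : ℤ) : ℂ) * Complex.exp (((j - l - k : ℤ) : ℂ) * t * Complex.I)
    have : ((j - l - k : ℤ) : ℂ) * t * Complex.I
        = (j:ℂ) * t * Complex.I + (-(l:ℂ) * t * Complex.I) + (-(k:ℂ) * t * Complex.I) := by
      push_cast; ring
    rw [this, Complex.exp_add, Complex.exp_add]
    push_cast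
    ring
  have cont : ∀ (j l : ℤ), Continuous (g j l) := by
    intro j l
    apply Continuous.mul continuous_const
    apply Complex.continuous_exp.comp
    exact (continuous_const.mul Complex.continuous_ofReal).mul continuous_const
  have step2 : (∫ t in (0:ℝ)..(2*Real.pi),
      f (Complex.exp ((t:ℂ) * Complex.I)) * Complex.exp (-(k : ℂ) * t * Complex.I))
        = ∑ j ∈ win n, ∑ l ∈ win n, ((F j * G l : ℤ) : ℂ) *
            (if (j - l - k : ℤ) = 0 then ((2*Real.pi:ℝ):ℂ) else 0) := by
    rw [intervalIntegral.integral_congr (g := fun t => ∑ j ∈ win n, ∑ l ∈ win n, g j l t)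
      (fun t _ => step1 t)]
    rw [intervalIntegral.integral_finset_sum]
    · apply Finset.sum_congr rfl
      intro j _
      rw [intervalIntegral.integral_finset_sum]
      · apply Finset.sum_congr rfl
        intro l _
        rw [hg]
        show (∫ t in (0:ℝ)..(2*Real.pi), ((F j * G l : ℤ) : ℂ) *
          Complex.exp (((j - l - k : ℤ) : ℂ) * t * Complex.I)) = _
        rw [intervalIntegral.integral_const_mul, integral_exp_eq]
      · intro l _
        exact (cont j l).intervalIntegrable _ _
    · intro j _
      apply (continuous_finset_sum _ (fun l _ => cont j l)).intervalIntegrable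
  have step3 : fc f k = ∑ j ∈ win n, ∑ l ∈ win n,
      (if j = l + k then ((F j : ℂ) * (G l : ℂ)) else 0) := by
    rw [fc, step2, Finset.mul_sum]
    apply Finset.sum_congr rfl
    intro j _
    rw [Finset.mul_sum]
    apply Finset.sum_congr rfl
    intro l _
    by_cases h : j = l + k
    · rw [if_pos h, if_pos (by omega : j - l - k = 0)]
      push_cast
      rw [mul_comm (((F j :ℂ)) * (G l)) (2 * (Real.pi:ℂ)), ← mul_assoc]
      have h2 : (2 * (Real.pi:ℂ)) ≠ 0 := by
        simp [Real.pi_ne_zero]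
      field_simp
    · rw [if_neg h, if_neg (by omega : ¬ (j - l - k = 0)), mul_zero, mul_zero]
  rw [step3, Finset.sum_comm]
  have : ∀ l ∈ win n, (∑ j ∈ win n, if j = l + k then ((F j : ℂ) * (G l : ℂ)) else 0)
      = (G l : ℂ) * (F (l + k) : ℂ) := by
    intro l _
    rw [Finset.sum_ite_eq' (win n) (l + k) (fun j => (F j : ℂ) * (G l : ℂ))]
    by_cases h : l + k ∈ win n
    · rw [if_pos h, mul_comm]
    · rw [if_neg h]
      rw [win, Finset.mem_Icc] at h
      rw [hF (l + k) (by omega)]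
      simp
  rw [Finset.sum_congr rfl this]
  rw [corr]
  push_cast
  rfl


def kk : ℕ → ℤ
  | 0 => 3
  | m + 1 => 4 * kk m - 1

lemma kk_eq (m : ℕ) : 3 * kk m = 2 * 2 ^ (2*m+2) + 1 := by
  induction m with
  | zero => rfl
  | succ m ih =>
      have : (2:ℤ) ^ (2*(m+1)+2) = 4 * 2 ^ (2*m+2) := by ring
      rw [kk, this]; omega

def w : ℕ → ℤ × ℤ × ℤ
  | 0 => (-1, 3, 1)
  | m + 1 => ((w m).1 * 2 - (w m).2.1,
      2 * (w m).1 + (w m).2.1 + 2 * (w m).2.2,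
      2 * (w m).2.2 - 2 * (w m).1 - (w m).2.1)

example : aP 2 3 = -1 := by decide
example : bb 2 (-1) = 3 := by decide
example : cc 2 (-1) = 1 := by decide

lemma main_ind (m : ℕ) :
    aP (2*m+2) (kk m) = (w m).1 ∧
    bb (2*m+2) (kk m - 2 ^ (2*m+2)) = (w m).2.1 ∧
    cc (2*m+2) (kk m - 2 ^ (2*m+2)) = (w m).2.2 := by
  induction m with
  | zero =>
      refine ⟨?_, ?_, ?_⟩ <;> show _ = _ <;> decide
  | succ m ih =>
      obtain ⟨h1, h2, h3⟩ := ih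
      have hN : (4:ℤ) ≤ 2 ^ (2*m+2) := by
        calc (4:ℤ) = 2^2 := by norm_num
        _ ≤ 2 ^ (2*m+2) := by
          apply pow_le_pow_right₀ (by norm_num); omega
      obtain ⟨s1, s2, s3⟩ := step_two (2*m+2) (kk m) (kk_eq m) hN
      have en : 2*(m+1)+2 = (2*m+2)+2 := by ring
      have ek : kk (m+1) = 4 * kk m - 1 := rfl
      have ep : (2:ℤ) ^ (2*(m+1)+2) = 4 * 2 ^ (2*m+2) := by ring
      have ep2 : (2:ℤ) ^ (2*m+2+2) = 4 * 2 ^ (2*m+2) := by ring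
      have w1 : (w (m+1)).1 = (w m).1 * 2 - (w m).2.1 := rfl
      have w2 : (w (m+1)).2.1 = 2 * (w m).1 + (w m).2.1 + 2 * (w m).2.2 := rfl
      have w3 : (w (m+1)).2.2 = 2 * (w m).2.2 - 2 * (w m).1 - (w m).2.1 := rfl
      refine ⟨?_, ?_, ?_⟩ <;> rw [en, ek]
      · rw [s1, w1]; omega
      · rw [ep2, s2, w2]; omega
      · rw [ep2, s3, w3]; omega


lemma Qe_sum (n : ℕ) (t : ℝ) :
    Qe n (Complex.exp ((t:ℂ) * Complex.I))
      = ∑ j ∈ win n, (qq n j : ℂ) * Complex.exp ((j:ℂ) * t * Complex.I) := by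
  rw [Qe, Polynomial.aeval_eq_sum_range' (deg_lt n).2 (Complex.exp ((t:ℂ) * Complex.I))]
  rw [win, show ((2:ℤ)^n - 1 : ℤ) = ((2^n : ℕ) : ℤ) - 1 by push_cast; ring,
    sum_Icc_range (2^n) (fun j => (qq n j : ℂ) * Complex.exp ((j:ℂ) * t * Complex.I))]
  apply Finset.sum_congr rfl
  intro i _
  rw [zsmul_eq_mul, (coeff_bridge n i).2]
  congr 1
  rw [← Complex.exp_nat_mul]
  congr 1
  push_cast
  ring

lemma conj_sum (n : ℕ) (c : ℤ → ℤ) (t : ℝ) :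
    (starRingEnd ℂ) (∑ j ∈ win n, (c j : ℂ) * Complex.exp ((j:ℂ) * t * Complex.I))
      = ∑ j ∈ win n, (c j : ℂ) * Complex.exp (-(j:ℂ) * t * Complex.I) := by
  rw [map_sum]
  apply Finset.sum_congr rfl
  intro j _
  rw [map_mul, map_intCast, ← Complex.exp_conj]
  congr 1
  simp [map_mul, Complex.conj_I, Complex.conj_ofReal]

lemma fc_fP (n : ℕ) (k : ℤ) : fc (fP n) k = ((aP n k : ℤ) : ℂ) := by
  apply fc_master n (pp n) (pp n) (supp_pp' n)
  intro t
  rw [fP, Pe_sum, conj_sum]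

lemma fc_fPQ (n : ℕ) (k : ℤ) : fc (fPQ n) k = ((bb n k : ℤ) : ℂ) := by
  apply fc_master n (qq n) (pp n) (supp_qq' n)
  intro t
  rw [fPQ, mul_comm, Qe_sum, Pe_sum, conj_sum]

lemma fc_fQP (n : ℕ) (k : ℤ) : fc (fQP n) k = ((cc n k : ℤ) : ℂ) := by
  apply fc_master n (pp n) (qq n) (supp_pp' n)
  intro t
  rw [fQP, Pe_sum, Qe_sum, conj_sum]

lemma mulVec_M2 (v : Fin 3 → ℂ) :
    M2.mulVec v = ![2 * v 0 - v 1, 2 * v 0 + v 1 + 2 * v 2, -(2 * v 0) - v 1 + 2 * v 2] := by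
  funext i
  fin_cases i <;>
    simp [M2, Matrix.mulVec, dotProduct, Fin.sum_univ_three] <;> ring

lemma Mpow (m : ℕ) : (M2 ^ (m+1)).mulVec ![0,1,1]
    = ![((w m).1 : ℂ), ((w m).2.1 : ℂ), ((w m).2.2 : ℂ)] := by
  induction m with
  | zero =>
      rw [pow_one, mulVec_M2]
      funext i
      fin_cases i <;> simp [w] <;> norm_num
  | succ m ih =>
      rw [pow_succ', ← Matrix.mulVec_mulVec, ih, mulVec_M2]
      have w1 : (w (m+1)).1 = (w m).1 * 2 - (w m).2.1 := rfl
      have w2 : (w (m+1)).2.1 = 2 * (w m).1 + (w m).2.1 + 2 * (w m).2.2 := rfl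
      have w3 : (w (m+1)).2.2 = 2 * (w m).2.2 - 2 * (w m).1 - (w m).2.1 := rfl
      funext i
      fin_cases i <;>
        simp only [Matrix.cons_val_zero, Matrix.cons_val_one, Matrix.head_cons,
          Matrix.cons_val_two, Matrix.tail_cons, w1, w2, w3] <;>
        push_cast <;> ring


theorem omega_even_formula (n : ℕ) (hn : 2 ≤ n) (he : Even n) :
    ![fc (fP n) ((2 * 2 ^ n + 1) / 3 : ℤ),
      fc (fPQ n) ((2 * 2 ^ n + 1) / 3 - 2 ^ n : ℤ),
      fc (fQP n) ((2 * 2 ^ n + 1) / 3 - 2 ^ n : ℤ)] =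
    (M2 ^ (n / 2)).mulVec ![0, 1, 1] := by
  obtain ⟨r, hr⟩ := he
  obtain ⟨m, rfl⟩ : ∃ m, n = 2*m+2 := ⟨r - 1, by omega⟩
  have hdiv : ((2 * 2 ^ (2*m+2) + 1 : ℤ) / 3) = kk m := by
    rw [← kk_eq m]
    exact Int.mul_ediv_cancel_left _ (by norm_num)
  have hhalf : (2*m+2)/2 = m + 1 := by omega
  obtain ⟨h1, h2, h3⟩ := main_ind m
  rw [hhalf, Mpow, hdiv, fc_fP, fc_fPQ, fc_fQP, h1, h2, h3]
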